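/- Let k be a field, Q a prime ideal of k[a] = k[a_1,…,a_m], and J an ideal of k[a,x] = k[a_1,…,a_m,x_1,…,x_n]; set J̃ = J + Q·k[a,x]. Let G be a minimal Gröbner basis of J̃ with respect to the block well order < (defined from a monomial well order ≺ on the x-exponents and a monomial well order <₀ on the a-exponents). Then for every g ∈ G: lc_≺(g) ∈ Q if and only if g lies in Q, i.e. g is a polynomial in the variables a alone and belongs to Q (in which case g = lc_≺(g)). -/

import Mathlib

noncomputable section

/-- A monomial order: a linear (strict total) order on an additive monoid of exponents,
compatible with addition. -/
structure IsMonomialOrder {M : Type*} [AddCommMonoid M] (lt : M → M → Prop) : Prop where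
  total : ∀ a b, lt a b ∨ a = b ∨ lt b a
  irrefl : ∀ a, ¬ lt a a
  trans : ∀ a b c, lt a b → lt b c → lt a c
  add_right : ∀ a b c, lt a b → lt (a + c) (b + c)

/-- A monomial well order: a monomial order for which `0` is the least element. -/
structure IsWellMonomialOrder {M : Type*} [AddCommMonoid M] (lt : M → M → Prop)
    extends IsMonomialOrder lt : Prop where
  zero_le : ∀ a, a = 0 ∨ lt 0 a

/-- `e + ℕ^σ` inside the exponent monoid `σ →₀ ℕ`. -/
def upSetG {σ : Type*} (e : σ →₀ ℕ) : Set (σ →₀ ℕ) := {α | ∃ γ, α = e + γ}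

/-- `e` is the `lt`-greatest exponent of the nonzero polynomial `f`. -/
def IsExpP {σ : Type*} {k : Type*} [CommSemiring k]
    (lt : (σ →₀ ℕ) → (σ →₀ ℕ) → Prop) (f : MvPolynomial σ k) (e : σ →₀ ℕ) : Prop :=
  e ∈ f.support ∧ ∀ β ∈ f.support, β ≠ e → lt β e

/-- The set of `lt`-leading exponents of the nonzero elements of an ideal of polynomials. -/
def ExpSetP {σ : Type*} {k : Type*} [CommSemiring k]
    (lt : (σ →₀ ℕ) → (σ →₀ ℕ) → Prop) (I : Ideal (MvPolynomial σ k)) : Set (σ →₀ ℕ) :=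
  {e | ∃ f ∈ I, IsExpP lt f e}

/-- The `x`-part of an exponent of `k[a,x]`. -/
def xpart {m n : ℕ} (μ : (Fin m ⊕ Fin n) →₀ ℕ) : Fin n →₀ ℕ :=
  (Finsupp.sumFinsuppEquivProdFinsupp μ).2

/-- The `a`-part of an exponent of `k[a,x]`. -/
def apart {m n : ℕ} (μ : (Fin m ⊕ Fin n) →₀ ℕ) : Fin m →₀ ℕ :=
  (Finsupp.sumFinsuppEquivProdFinsupp μ).1

/-- `e` is the `prec`-greatest `x`-exponent `exp_≺(f)` occurring in `f ∈ k[a,x]`. -/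
def IsExpX {m n : ℕ} {k : Type*} [CommSemiring k]
    (prec : (Fin n →₀ ℕ) → (Fin n →₀ ℕ) → Prop)
    (f : MvPolynomial (Fin m ⊕ Fin n) k) (e : Fin n →₀ ℕ) : Prop :=
  (∃ μ ∈ f.support, xpart μ = e) ∧ ∀ μ ∈ f.support, xpart μ ≠ e → prec (xpart μ) e

/-- `lc_≺(f) ∈ k[a]`: the coefficient of `x^e` in `f ∈ k[a,x]` viewed as a polynomial in
`x` over `k[a]`. -/
def lcx {m n : ℕ} {k : Type*} [CommSemiring k]
    (f : MvPolynomial (Fin m ⊕ Fin n) k) (e : Fin n →₀ ℕ) : MvPolynomial (Fin m) k :=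
  ∑ μ ∈ f.support.filter (fun μ => xpart μ = e),
    MvPolynomial.monomial (apart μ) (MvPolynomial.coeff μ f)

/-- The block order `<` on the exponents of `k[a,x]` built from `prec` (on the `x`-part)
and `lt0` (on the `a`-part). -/
def blockLt {m n : ℕ} (prec : (Fin n →₀ ℕ) → (Fin n →₀ ℕ) → Prop)
    (lt0 : (Fin m →₀ ℕ) → (Fin m →₀ ℕ) → Prop)
    (μ μ' : (Fin m ⊕ Fin n) →₀ ℕ) : Prop :=
  prec (xpart μ) (xpart μ') ∨ (xpart μ = xpart μ' ∧ lt0 (apart μ) (apart μ'))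

/-- The embedding `k[a] → k[a,x]`. -/
def embA {m n : ℕ} {k : Type*} [CommSemiring k] :
    MvPolynomial (Fin m) k →+* MvPolynomial (Fin m ⊕ Fin n) k :=
  (MvPolynomial.rename (Sum.inl : Fin m → Fin m ⊕ Fin n)).toRingHom

def combineE {m n : ℕ} (d : Fin m →₀ ℕ) (e : Fin n →₀ ℕ) : (Fin m ⊕ Fin n) →₀ ℕ :=
  Finsupp.sumFinsuppEquivProdFinsupp.symm (d, e)

lemma apart_combineE {m n : ℕ} (d : Fin m →₀ ℕ) (e : Fin n →₀ ℕ) :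
    apart (combineE d e) = d := by
  rw [apart, combineE, Equiv.apply_symm_apply]

lemma xpart_combineE {m n : ℕ} (d : Fin m →₀ ℕ) (e : Fin n →₀ ℕ) :
    xpart (combineE d e) = e := by
  rw [xpart, combineE, Equiv.apply_symm_apply]

lemma combineE_parts {m n : ℕ} (μ : (Fin m ⊕ Fin n) →₀ ℕ) :
    combineE (apart μ) (xpart μ) = μ := by
  rw [apart, xpart, combineE, Prod.mk.eta, Equiv.symm_apply_apply]

lemma combineE_add {m n : ℕ} (d d' : Fin m →₀ ℕ) (e e' : Fin n →₀ ℕ) :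
    combineE (d + d') (e + e') = combineE d e + combineE d' e' := by
  ext s
  cases s with
  | inl i => simp [combineE, Finsupp.sumFinsuppEquivProdFinsupp_symm_inl]
  | inr j => simp [combineE, Finsupp.sumFinsuppEquivProdFinsupp_symm_inr]

lemma mapDomain_inl_eq_combineE {m n : ℕ} (d : Fin m →₀ ℕ) :
    Finsupp.mapDomain (Sum.inl : Fin m → Fin m ⊕ Fin n) d = combineE d 0 := by
  ext s
  cases s with
  | inl i =>
      rw [Finsupp.mapDomain_apply Sum.inl_injective]
      simp [combineE, Finsupp.sumFinsuppEquivProdFinsupp_symm_inl]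
  | inr j =>
      rw [Finsupp.mapDomain_notin_range]
      · simp [combineE, Finsupp.sumFinsuppEquivProdFinsupp_symm_inr]
      · rintro ⟨i, h⟩; exact Sum.inl_ne_inr h

lemma combineE_apply_inr {m n : ℕ} (d : Fin m →₀ ℕ) (e : Fin n →₀ ℕ) (j : Fin n) :
    combineE d e (Sum.inr j) = e j :=
  Finsupp.sumFinsuppEquivProdFinsupp_symm_inr _ _

lemma embA_apply {m n : ℕ} {k : Type*} [CommSemiring k] (p : MvPolynomial (Fin m) k) :
    embA (n := n) p = MvPolynomial.rename Sum.inl p := rfl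

lemma coeff_lcx {m n : ℕ} {k : Type*} [CommSemiring k]
    (g : MvPolynomial (Fin m ⊕ Fin n) k) (e : Fin n →₀ ℕ) (d : Fin m →₀ ℕ) :
    MvPolynomial.coeff d (lcx g e) = MvPolynomial.coeff (combineE d e) g := by
  classical
  rw [lcx, MvPolynomial.coeff_sum]
  by_cases h : combineE d e ∈ g.support.filter (fun μ => xpart μ = e)
  · rw [Finset.sum_eq_single_of_mem (combineE d e) h]
    · simp [MvPolynomial.coeff_monomial, apart_combineE]
    · intro ν hν hne
      rw [MvPolynomial.coeff_monomial, if_neg]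
      intro hd
      apply hne
      have hx : xpart ν = e := (Finset.mem_filter.mp hν).2
      rw [← combineE_parts ν, hx, hd]
  · rw [Finset.sum_eq_zero, eq_comm]
    · rw [MvPolynomial.coeff, ← Finsupp.notMem_support_iff]
      intro hmem
      exact h (Finset.mem_filter.mpr ⟨hmem, xpart_combineE _ _⟩)
    · intro ν hν
      rw [MvPolynomial.coeff_monomial, if_neg]
      intro hd
      apply h
      have hx : xpart ν = e := (Finset.mem_filter.mp hν).2
      rwa [← combineE_parts ν, hx, hd] at hν

lemma exists_rel_max {α : Type*} (r : α → α → Prop)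
    (htot : ∀ a b, r a b ∨ a = b ∨ r b a) (htr : ∀ a b c, r a b → r b c → r a c)
    (s : Finset α) (hs : s.Nonempty) : ∃ e ∈ s, ∀ b ∈ s, b ≠ e → r b e := by
  classical
  induction s using Finset.induction with
  | empty => exact absurd hs (by simp)
  | @insert a s ha ih =>
      rcases s.eq_empty_or_nonempty with rfl | hsne
      · exact ⟨a, by simp, by simp⟩
      · obtain ⟨e, he, hmax⟩ := ih hsne
        rcases htot a e with h | h | h
        · refine ⟨e, Finset.mem_insert_of_mem he, ?_⟩
          intro b hb hbe
          rcases Finset.mem_insert.mp hb with rfl | hb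
          · exact h
          · exact hmax b hb hbe
        · subst h
          refine ⟨a, Finset.mem_insert_self _ _, ?_⟩
          intro b hb hbe
          rcases Finset.mem_insert.mp hb with rfl | hb'
          · exact absurd rfl hbe
          · exact hmax b hb' hbe
        · refine ⟨a, Finset.mem_insert_self _ _, ?_⟩
          intro b hb hba
          rcases Finset.mem_insert.mp hb with rfl | hb
          · exact absurd rfl hba
          · by_cases hbe : b = e
            · exact hbe ▸ h
            · exact htr _ _ _ (hmax b hb hbe) h

lemma blockLt_trans {m n : ℕ} {prec : (Fin n →₀ ℕ) → (Fin n →₀ ℕ) → Prop}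
    {lt0 : (Fin m →₀ ℕ) → (Fin m →₀ ℕ) → Prop}
    (hp : IsMonomialOrder prec) (h0 : IsMonomialOrder lt0) :
    ∀ a b c, blockLt prec lt0 a b → blockLt prec lt0 b c → blockLt prec lt0 a c := by
  rintro a b c (h1 | ⟨h1, h1'⟩) (h2 | ⟨h2, h2'⟩)
  · exact Or.inl (hp.trans _ _ _ h1 h2)
  · left; rw [← h2]; exact h1
  · left; rw [h1]; exact h2
  · exact Or.inr ⟨h1.trans h2, h0.trans _ _ _ h1' h2'⟩

lemma blockLt_irrefl {m n : ℕ} {prec : (Fin n →₀ ℕ) → (Fin n →₀ ℕ) → Prop}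
    {lt0 : (Fin m →₀ ℕ) → (Fin m →₀ ℕ) → Prop}
    (hp : IsMonomialOrder prec) (h0 : IsMonomialOrder lt0) :
    ∀ a, ¬ blockLt prec lt0 a a := by
  rintro a (h | ⟨-, h⟩)
  · exact hp.irrefl _ h
  · exact h0.irrefl _ h

lemma expP_unique {σ : Type*} {k : Type*} [CommSemiring k]
    {lt : (σ →₀ ℕ) → (σ →₀ ℕ) → Prop}
    (htr : ∀ a b c, lt a b → lt b c → lt a c) (hirr : ∀ a, ¬ lt a a)
    {f : MvPolynomial σ k} {ε ε' : σ →₀ ℕ}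
    (h : IsExpP lt f ε) (h' : IsExpP lt f ε') : ε = ε' := by
  by_contra hne
  exact hirr _ (htr _ _ _ (h'.2 ε h.1 hne) (h.2 ε' h'.1 (Ne.symm hne)))


/-- for a minimal Gröbner basis `G` of `J̃ = J + Q·k[a,x]` with respect to
the block well order `<`, every `g ∈ G` satisfies: `lc_≺(g) ∈ Q` iff `g` is a polynomial
in the variables `a` alone belonging to `Q`, in which case `g = lc_≺(g)`. -/
theorem lc_in_Q_iff_mem_Q {m n : ℕ} (k : Type) [Field k]
    (prec : (Fin n →₀ ℕ) → (Fin n →₀ ℕ) → Prop) (hprec : IsWellMonomialOrder prec)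
    (lt0 : (Fin m →₀ ℕ) → (Fin m →₀ ℕ) → Prop) (hlt0 : IsWellMonomialOrder lt0)
    (Q : Ideal (MvPolynomial (Fin m) k)) (hQ : Q.IsPrime)
    (J : Ideal (MvPolynomial (Fin m ⊕ Fin n) k))
    (Jt : Ideal (MvPolynomial (Fin m ⊕ Fin n) k))
    (hJt : Jt = J ⊔ Ideal.map (embA (n := n)) Q)
    (G : Finset (MvPolynomial (Fin m ⊕ Fin n) k))
    (hGJt : ∀ g ∈ G, g ∈ Jt) (hGne : ∀ g ∈ G, g ≠ 0)
    (hGB : ExpSetP (blockLt prec lt0) Jt =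
      ⋃ g ∈ G, {μ | ∃ ε, IsExpP (blockLt prec lt0) g ε ∧ μ ∈ upSetG ε})
    (hmin : ∀ g ∈ G, ∀ g' ∈ G, g ≠ g' → ∀ ε ε',
      IsExpP (blockLt prec lt0) g ε → IsExpP (blockLt prec lt0) g' ε' → ε ∉ upSetG ε') :
    ∀ g ∈ G, ∀ e, IsExpX prec g e →
      ((lcx g e ∈ Q ↔ ∃ p ∈ Q, g = embA p) ∧
        (lcx g e ∈ Q → g = embA (lcx g e))) := by
  classical
  intro g hg e hex
  have claimA : ∀ p : MvPolynomial (Fin m) k, g = embA p → e = 0 ∧ lcx g e = p := by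
    intro p hp
    obtain ⟨μ, hμ, hxμ⟩ := hex.1
    have hco : MvPolynomial.coeff μ g ≠ 0 := MvPolynomial.mem_support_iff.mp hμ
    rw [hp, embA_apply] at hco
    obtain ⟨u, hu, -⟩ := MvPolynomial.coeff_rename_ne_zero _ _ _ hco
    have he0 : e = 0 := by
      rw [← hxμ, ← hu, mapDomain_inl_eq_combineE, xpart_combineE]
    subst he0
    refine ⟨rfl, ?_⟩
    ext d
    rw [coeff_lcx, hp, embA_apply, ← mapDomain_inl_eq_combineE,
      MvPolynomial.coeff_rename_mapDomain _ Sum.inl_injective]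
  have key : lcx g e ∈ Q → e = 0 ∧ g = embA (lcx g e) := by
    intro hcQ
    obtain ⟨μ0, hμ0, hxμ0⟩ := hex.1
    have hcoμ0 : MvPolynomial.coeff (apart μ0) (lcx g e) ≠ 0 := by
      rw [coeff_lcx, ← hxμ0, combineE_parts]
      exact MvPolynomial.mem_support_iff.mp hμ0
    obtain ⟨d, hd, hdmax⟩ := exists_rel_max lt0 hlt0.total hlt0.trans (lcx g e).support
      ⟨apart μ0, MvPolynomial.mem_support_iff.mpr hcoμ0⟩
    have hδ : IsExpP (blockLt prec lt0) (embA (lcx g e)) (combineE d 0) := by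
      constructor
      · rw [MvPolynomial.mem_support_iff, embA_apply, ← mapDomain_inl_eq_combineE,
          MvPolynomial.coeff_rename_mapDomain _ Sum.inl_injective]
        exact MvPolynomial.mem_support_iff.mp hd
      · intro ν hν hne
        have hcoν := MvPolynomial.mem_support_iff.mp hν
        rw [embA_apply] at hcoν
        obtain ⟨u, hu, hcu⟩ := MvPolynomial.coeff_rename_ne_zero _ _ _ hcoν
        rw [mapDomain_inl_eq_combineE] at hu
        subst hu
        refine Or.inr ⟨by rw [xpart_combineE, xpart_combineE], ?_⟩
        rw [apart_combineE, apart_combineE]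
        refine hdmax u (MvPolynomial.mem_support_iff.mpr hcu) ?_
        intro h
        exact hne (by rw [h])
    have hmem : combineE d 0 ∈ ExpSetP (blockLt prec lt0) Jt := by
      refine ⟨embA (lcx g e), ?_, hδ⟩
      rw [hJt]
      exact Ideal.mem_sup_right (Ideal.mem_map_of_mem _ hcQ)
    rw [hGB] at hmem
    simp only [Set.mem_iUnion, Set.mem_setOf_eq] at hmem
    obtain ⟨g', hg', ε'', hε'', hup0⟩ := hmem
    obtain ⟨γ, hγ⟩ := hup0
    have hε : IsExpP (blockLt prec lt0) g (combineE d e) := by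
      constructor
      · rw [MvPolynomial.mem_support_iff, ← coeff_lcx]
        exact MvPolynomial.mem_support_iff.mp hd
      · intro μ hμ hne
        by_cases hx : xpart μ = e
        · refine Or.inr ⟨by rw [hx, xpart_combineE], ?_⟩
          rw [apart_combineE]
          have hcc : MvPolynomial.coeff (apart μ) (lcx g e) ≠ 0 := by
            rw [coeff_lcx, ← hx, combineE_parts]
            exact MvPolynomial.mem_support_iff.mp hμ
          refine hdmax _ (MvPolynomial.mem_support_iff.mpr hcc) ?_
          intro h
          exact hne (by rw [← combineE_parts μ, hx, h])
        · refine Or.inl ?_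
          rw [xpart_combineE]
          exact hex.2 μ hμ hx
    have hup : combineE d e ∈ upSetG ε'' := by
      refine ⟨γ + combineE 0 e, ?_⟩
      rw [show combineE d e = combineE d 0 + combineE 0 e by
        rw [← combineE_add, add_zero, zero_add], hγ, add_assoc]
    have hgg' : g = g' := by
      by_contra hne
      exact hmin g hg g' hg' hne _ _ hε hε'' hup
    subst hgg'
    have hεeq : ε'' = combineE d e :=
      expP_unique (blockLt_trans hprec.toIsMonomialOrder hlt0.toIsMonomialOrder)
        (blockLt_irrefl hprec.toIsMonomialOrder hlt0.toIsMonomialOrder) hε'' hε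
    rw [hεeq] at hγ
    have he0 : e = 0 := by
      ext j
      have h := congrArg (fun f : (Fin m ⊕ Fin n) →₀ ℕ => f (Sum.inr j)) hγ
      simp only [Finsupp.add_apply, combineE_apply_inr, Finsupp.coe_zero,
        Pi.zero_apply] at h
      simp only [Finsupp.coe_zero, Pi.zero_apply]
      omega
    subst he0
    have hall0 : ∀ μ ∈ g.support, xpart μ = 0 := by
      intro μ hμ
      by_contra hx
      have h1 := hex.2 μ hμ hx
      rcases hprec.zero_le (xpart μ) with h2 | h2
      · exact hx h2
      · exact hprec.irrefl _ (hprec.trans _ _ _ h1 h2)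
    refine ⟨rfl, ?_⟩
    ext ν
    by_cases hx : xpart ν = 0
    · have hν : ν = combineE (apart ν) 0 := by rw [← hx, combineE_parts]
      rw [hν, embA_apply, ← mapDomain_inl_eq_combineE,
        MvPolynomial.coeff_rename_mapDomain _ Sum.inl_injective, coeff_lcx,
        mapDomain_inl_eq_combineE]
    · have h1 : MvPolynomial.coeff ν g = 0 := by
        by_contra h
        exact hx (hall0 ν (MvPolynomial.mem_support_iff.mpr h))
      rw [h1, eq_comm, embA_apply]
      apply MvPolynomial.coeff_rename_eq_zero
      intro u hu
      exfalso
      apply hx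
      rw [← hu, mapDomain_inl_eq_combineE, xpart_combineE]
  refine ⟨⟨fun hcQ => ⟨lcx g e, hcQ, (key hcQ).2⟩, ?_⟩, fun hcQ => (key hcQ).2⟩
  rintro ⟨p, hpQ, hgp⟩
  rw [(claimA p hgp).2]
  exact hpQ
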